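/- arXiv:0902.3886 — 2 statements merged into one kernel-verified Lean document; each statement's English description precedes it below -/
import Mathlib

section
/- Let A be a unital C*-algebra. There exists a unital *-homomorphism from M₃(ℂ) ⊕ M₂(ℂ) into A if and only if A contains projections e and e' such that e·e' = 0, e ∼ e' (Murray–von Neumann equivalence), and 1 − e − e' ≾ e (Murray–von Neumann subequivalence). -/
set_option maxHeartbeats 1000000

open Finset

/-- A projection in a C*-algebra: a self-adjoint idempotent. -/
def IsProjection {A : Type*} [Ring A] [StarRing A] (p : A) : Prop :=
  IsSelfAdjoint p ∧ p * p = p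

/-- Murray–von Neumann equivalence of projections. -/
def MvNEquiv {A : Type*} [Ring A] [StarRing A] (p q : A) : Prop :=
  ∃ v : A, star v * v = p ∧ v * star v = q

/-- Murray–von Neumann subequivalence: `p` is equivalent to a subprojection of `q`. -/
def MvNSubequiv {A : Type*} [Ring A] [StarRing A] (p q : A) : Prop :=
  ∃ r : A, IsProjection r ∧ r = q * r ∧ r = r * q ∧ MvNEquiv p r

lemma star_stdBasisMatrix' {N : Type*} [Fintype N] [DecidableEq N] (i j : N) :
    star (Matrix.single i j (1:ℂ)) = Matrix.single j i 1 := by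
  ext a b
  simp [Matrix.star_apply, Matrix.single, and_comm, apply_ite (star : ℂ → ℂ)]


lemma mul_expand {A : Type*} [Ring A] [Algebra ℂ A] {n : ℕ}
    (E : Fin n → Fin n → A) (hE : ∀ i j k l, E i j * E k l = if j = k then E i l else 0)
    (a b : Matrix (Fin n) (Fin n) ℂ) :
    (∑ i, ∑ j, a i j • E i j) * (∑ k, ∑ l, b k l • E k l)
      = ∑ i, ∑ l, (a * b) i l • E i l := by
  simp only [Finset.sum_mul, Finset.mul_sum, smul_mul_assoc, mul_smul_comm, smul_smul, hE,
    smul_ite, smul_zero, Matrix.mul_apply, Finset.sum_smul]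
  simp only [Finset.sum_ite_eq', Finset.mem_univ, if_true, smul_smul]
  rw [Finset.sum_comm]
  conv_rhs => rw [Finset.sum_comm]
  refine Finset.sum_congr rfl fun l _ => ?_
  rw [Finset.sum_comm]
  exact Finset.sum_congr rfl fun i _ => by simp [Finset.smul_sum, smul_smul, mul_comm]

lemma mul_expand_zero {A : Type*} [Ring A] [Algebra ℂ A] {n m : ℕ}
    (E : Fin n → Fin n → A) (G : Fin m → Fin m → A)
    (h : ∀ i j k l, E i j * G k l = 0)
    (a : Matrix (Fin n) (Fin n) ℂ) (b : Matrix (Fin m) (Fin m) ℂ) :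
    (∑ i, ∑ j, a i j • E i j) * (∑ k, ∑ l, b k l • G k l) = 0 := by
  simp [Finset.sum_mul, Finset.mul_sum, smul_mul_assoc, mul_smul_comm, h]

lemma matrix_units_hom {A : Type*} [Ring A] [StarRing A] [Algebra ℂ A] [StarModule ℂ A]
    {n m : ℕ} (s : Fin n → A) (t : Fin m → A) (p q : A)
    (hs : ∀ i j, star (s i) * s j = if i = j then p else 0)
    (ht : ∀ i j, star (t i) * t j = if i = j then q else 0)
    (hst : ∀ i j, star (s i) * t j = 0)
    (hsp : ∀ i, s i * p = s i) (htq : ∀ i, t i * q = t i)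
    (hone : (∑ i, s i * star (s i)) + (∑ j, t j * star (t j)) = 1) :
    Nonempty ((Matrix (Fin n) (Fin n) ℂ × Matrix (Fin m) (Fin m) ℂ) →⋆ₐ[ℂ] A) := by
  set E : Fin n → Fin n → A := fun i j => s i * star (s j) with hE
  set G : Fin m → Fin m → A := fun i j => t i * star (t j) with hG
  have hEE : ∀ i j k l, E i j * E k l = if j = k then E i l else 0 := by
    intro i j k l
    simp only [hE]
    rw [mul_assoc, ← mul_assoc (star (s j)), hs]
    by_cases h : j = k
    · simp [h, ← mul_assoc, hsp]
    · simp [h]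
  have hGG : ∀ i j k l, G i j * G k l = if j = k then G i l else 0 := by
    intro i j k l
    simp only [hG]
    rw [mul_assoc, ← mul_assoc (star (t j)), ht]
    by_cases h : j = k
    · simp [h, ← mul_assoc, htq]
    · simp [h]
  have hEG : ∀ i j k l, E i j * G k l = 0 := by
    intro i j k l
    simp only [hE, hG]
    rw [mul_assoc, ← mul_assoc (star (s j)), hst]
    simp
  have hGE : ∀ i j k l, G i j * E k l = 0 := by
    intro i j k l
    have hts : star (t j) * s k = 0 := by
      have := congrArg star (hst k j)
      simpa [star_mul] using this
    simp only [hE, hG]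
    rw [mul_assoc, ← mul_assoc (star (t j)), hts]
    simp
  set F : Matrix (Fin n) (Fin n) ℂ × Matrix (Fin m) (Fin m) ℂ → A := fun x =>
    (∑ i, ∑ j, x.1 i j • E i j) + (∑ i, ∑ j, x.2 i j • G i j) with hF
  have hFone : F 1 = 1 := by
    simp only [hF, Prod.fst_one, Prod.snd_one, Matrix.one_apply, ite_smul, one_smul, zero_smul,
      Finset.sum_ite_eq, Finset.mem_univ, if_true]
    simpa [hE, hG] using hone
  have hFmul : ∀ x y, F (x * y) = F x * F y := by
    intro x y
    simp only [hF, Prod.fst_mul, Prod.snd_mul]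
    rw [add_mul, mul_add, mul_add, mul_expand E hEE, mul_expand G hGG,
      mul_expand_zero E G hEG, mul_expand_zero G E hGE]
    abel
  have hFadd : ∀ x y, F (x + y) = F x + F y := by
    intro x y
    simp only [hF, Prod.fst_add, Prod.snd_add, Matrix.add_apply, add_smul, Finset.sum_add_distrib]
    abel
  have hFsmul : ∀ (c : ℂ) x, F (c • x) = c • F x := by
    intro c x
    simp only [hF, Prod.smul_fst, Prod.smul_snd, Matrix.smul_apply, smul_eq_mul, mul_smul,
      Finset.smul_sum, smul_add]
  have hFstar : ∀ x, F (star x) = star (F x) := by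
    intro x
    simp only [hF, star_add, star_sum, star_smul, Prod.fst_star, Prod.snd_star,
      Matrix.star_apply, hE, hG, star_mul, star_star]
    congr 1
    · rw [Finset.sum_comm]
    · rw [Finset.sum_comm]
  exact ⟨{ toFun := F
           map_one' := hFone
           map_mul' := hFmul
           map_zero' := by simp [hF]
           map_add' := hFadd
           commutes' := by
             intro c
             rw [Algebra.algebraMap_eq_smul_one, Algebra.algebraMap_eq_smul_one]
             show F (c • 1) = c • 1
             rw [hFsmul, hFone]
           map_star' := fun x => by
             show F (star x) = star (F x)
             exact hFstar x }⟩


lemma mul_source_proj {A : Type*} [NormedRing A] [StarRing A] [CStarRing A]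
    {x p : A} (h : star x * x = p) (hp : p * p = p) : x * p = x := by
  have hsp : star p = p := by rw [← h, star_mul, star_star, h]
  have h0 : star (x * p - x) * (x * p - x) = 0 := by
    rw [star_sub, star_mul, hsp]
    have e1 : (p * star x - star x) * (x * p - x)
        = p * (star x * x) * p - p * (star x * x) - star x * x * p + star x * x := by
      noncomm_ring
    rw [e1, h]
    simp [hp, ← mul_assoc]
  exact sub_eq_zero.mp ((CStarRing.star_mul_self_eq_zero_iff _).mp h0)

lemma range_proj_mul {A : Type*} [NormedRing A] [StarRing A] [CStarRing A]
    {x q : A} (h : x * star x = q) (hq : q * q = q) : q * x = x := by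
  have h' : star (star x) * star x = q := by rwa [star_star]
  have h2 := mul_source_proj h' hq
  have hsq : star q = q := by rw [← h, star_mul, star_star, h]
  calc q * x = star (star x * star q) := by rw [star_mul, star_star, star_star]
    _ = x := by rw [hsq, h2, star_star]


/-- There is a unital *-homomorphism from `M₃(ℂ) ⊕ M₂(ℂ)` into a unital
C*-algebra `A` if and only if `A` contains projections `e, e'` with `e ⊥ e'`, `e ∼ e'`,
and `1 - e - e' ≾ e`. -/
theorem unital_hom_from_M3_oplus_M2_iff
    {A : Type*} [NormedRing A] [StarRing A] [CStarRing A] [CompleteSpace A]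
    [NormedAlgebra ℂ A] [StarModule ℂ A] :
    Nonempty ((Matrix (Fin 3) (Fin 3) ℂ × Matrix (Fin 2) (Fin 2) ℂ) →⋆ₐ[ℂ] A) ↔
      ∃ e e' : A, IsProjection e ∧ IsProjection e' ∧ e * e' = 0 ∧
        MvNEquiv e e' ∧ MvNSubequiv (1 - e - e') e := by
  constructor
  · rintro ⟨φ⟩

    set B := Matrix (Fin 3) (Fin 3) ℂ × Matrix (Fin 2) (Fin 2) ℂ with hB
    set E : B := (Matrix.single 0 0 1, Matrix.single 0 0 1) with hE
    set E' : B := (Matrix.single 1 1 1, Matrix.single 1 1 1) with hE'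
    set V : B := (Matrix.single 1 0 1, Matrix.single 1 0 1) with hV
    set R : B := (Matrix.single 0 0 1, 0) with hR
    set W : B := (Matrix.single 0 2 1, 0) with hW
    have hstarE : star E = E := by
      rw [hE, Prod.star_def]
      simp [star_stdBasisMatrix']
    have hstarE' : star E' = E' := by
      rw [hE', Prod.star_def]
      simp [star_stdBasisMatrix']
    have hstarR : star R = R := by
      rw [hR, Prod.star_def]
      simp [star_stdBasisMatrix']
    have hEE : E * E = E := by
      rw [hE, Prod.mk_mul_mk]
      simp [Matrix.single_mul_single_same]
    have hE'E' : E' * E' = E' := by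
      rw [hE', Prod.mk_mul_mk]
      simp [Matrix.single_mul_single_same]
    have hRR : R * R = R := by
      rw [hR, Prod.mk_mul_mk]
      simp [Matrix.single_mul_single_same]
    have hEE' : E * E' = 0 := by
      rw [hE, hE', Prod.mk_mul_mk]
      refine Prod.ext ?_ ?_ <;>
      · ext a b
        fin_cases a <;> fin_cases b <;>
          simp [Matrix.mul_apply, Matrix.single, Fin.sum_univ_succ]
    have hVV : star V * V = E := by
      rw [hV, hE, Prod.star_def, Prod.mk_mul_mk]
      simp [star_stdBasisMatrix', Matrix.single_mul_single_same]
    have hVV' : V * star V = E' := by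
      rw [hV, hE', Prod.star_def, Prod.mk_mul_mk]
      simp [star_stdBasisMatrix', Matrix.single_mul_single_same]
    have hER : E * R = R := by
      rw [hE, hR, Prod.mk_mul_mk]
      simp [Matrix.single_mul_single_same]
    have hRE : R * E = R := by
      rw [hE, hR, Prod.mk_mul_mk]
      simp [Matrix.single_mul_single_same]
    have hsub : (1 : B) - E - E' = (Matrix.single 2 2 1, 0) := by
      rw [hE, hE']
      refine Prod.ext ?_ ?_
      · show (1 : Matrix (Fin 3) (Fin 3) ℂ) - _ - _ = _
        ext a b
        fin_cases a <;> fin_cases b <;>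
          simp [Matrix.one_apply, Matrix.single]
      · show (1 : Matrix (Fin 2) (Fin 2) ℂ) - _ - _ = _
        ext a b
        fin_cases a <;> fin_cases b <;>
          simp [Matrix.one_apply, Matrix.single]
    have hWW : star W * W = (1 : B) - E - E' := by
      rw [hsub, hW, Prod.star_def, Prod.mk_mul_mk]
      simp [star_stdBasisMatrix', Matrix.single_mul_single_same]
    have hWW' : W * star W = R := by
      rw [hW, hR, Prod.star_def, Prod.mk_mul_mk]
      simp [star_stdBasisMatrix', Matrix.single_mul_single_same]
    refine ⟨φ E, φ E', ?_, ?_, ?_, ?_, ?_⟩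
    · exact ⟨by rw [IsSelfAdjoint, ← map_star, hstarE], by rw [← map_mul, hEE]⟩
    · exact ⟨by rw [IsSelfAdjoint, ← map_star, hstarE'], by rw [← map_mul, hE'E']⟩
    · rw [← map_mul, hEE', map_zero]
    · exact ⟨φ V, by rw [← map_star, ← map_mul, hVV], by rw [← map_star, ← map_mul, hVV']⟩
    · refine ⟨φ R, ⟨by rw [IsSelfAdjoint, ← map_star, hstarR], by rw [← map_mul, hRR]⟩,
        by rw [← map_mul, hER], by rw [← map_mul, hRE],
        ⟨φ W, ?_, by rw [← map_star, ← map_mul, hWW']⟩⟩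
      rw [← map_star, ← map_mul, hWW]
      simp only [map_sub, map_one]
  · rintro ⟨e, e', he, he', hee', ⟨v, hv1, hv2⟩, ⟨r, hr, hre0, her0, ⟨w, hw1, hw2⟩⟩⟩

    have ap : ∀ {a b c : A}, a * b = c → ∀ x : A, a * (b * x) = c * x :=
      fun h x => by rw [← mul_assoc, h]
    have hsa := he.1.star_eq
    have h'sa := he'.1.star_eq
    have hrsa := hr.1.star_eq
    have hee := he.2
    have he'e' := he'.2
    have hrr := hr.2
    have he'e : e' * e = 0 := by
      simpa [star_mul, hsa, h'sa, star_star] using congrArg star hee'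
    have her : e * r = r := hre0.symm
    have hre : r * e = r := her0.symm
    have he'r : e' * r = 0 := by rw [hre0, ← mul_assoc, he'e, zero_mul]
    have hre' : r * e' = 0 := by rw [her0, mul_assoc, hee', mul_zero]
    have hve : v * e = v := mul_source_proj hv1 hee
    have hev' : e * star v = star v := by
      simpa [star_mul, hsa, star_star] using congrArg star hve
    have he'v : e' * v = v := range_proj_mul hv2 he'e'
    have hv'e' : star v * e' = star v := by
      simpa [star_mul, h'sa, star_star] using congrArg star he'v
    have hev : e * v = 0 := by rw [← he'v, ← mul_assoc, hee', zero_mul]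
    have hv'e : star v * e = 0 := by
      simpa [star_mul, hsa, star_star] using congrArg star hev
    have hve' : v * e' = 0 := by rw [← hve, mul_assoc, hee', mul_zero]
    have he'v' : e' * star v = 0 := by
      simpa [star_mul, h'sa, star_star] using congrArg star hve'
    have hvv : v * v = 0 := by
      nth_rewrite 2 [← he'v]
      rw [← mul_assoc, hve', zero_mul]
    have hv'v' : star v * star v = 0 := by
      simpa [star_mul, star_star] using congrArg star hvv
    have hrv : r * v = 0 := by rw [← he'v, ← mul_assoc, hre', zero_mul]
    have hv'r : star v * r = 0 := by
      simpa [star_mul, hrsa, star_star] using congrArg star hrv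
    have hff : (1 - e - e') * (1 - e - e') = 1 - e - e' := by
      simp only [mul_sub, sub_mul, mul_one, one_mul, hee, he'e', hee', he'e]
      abel
    have hwf : w * (1 - e - e') = w := mul_source_proj hw1 hff
    have hrw : r * w = w := range_proj_mul hw2 hrr
    have hw'r : star w * r = star w := by
      simpa [star_mul, hrsa, star_star] using congrArg star hrw
    have hfe : (1 - e - e') * e = 0 := by
      simp [sub_mul, hee, he'e]
    have hfe' : (1 - e - e') * e' = 0 := by
      simp [sub_mul, he'e', hee']
    have hwe : w * e = 0 := by rw [← hwf, mul_assoc, hfe, mul_zero]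
    have hwe' : w * e' = 0 := by rw [← hwf, mul_assoc, hfe', mul_zero]
    have hew' : e * star w = 0 := by
      simpa [star_mul, hsa, star_star] using congrArg star hwe
    have he'w' : e' * star w = 0 := by
      simpa [star_mul, h'sa, star_star] using congrArg star hwe'
    have hew : e * w = w := by rw [← hrw, ← mul_assoc, her]
    have he'w : e' * w = 0 := by rw [← hrw, ← mul_assoc, he'r, zero_mul]
    have hw'e : star w * e = star w := by
      simpa [star_mul, hsa, star_star] using congrArg star hew
    have hw'e' : star w * e' = 0 := by
      simpa [star_mul, h'sa, star_star] using congrArg star he'w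
    have hwr : w * r = 0 := by rw [hre0, ← mul_assoc, hwe, zero_mul]
    have hrw' : r * star w = 0 := by
      simpa [star_mul, hrsa, star_star] using congrArg star hwr
    have hwv : w * v = 0 := by rw [← he'v, ← mul_assoc, hwe', zero_mul]
    have hv'w' : star v * star w = 0 := by
      simpa [star_mul, star_star] using congrArg star hwv
    have hwv' : w * star v = 0 := by rw [← hev', ← mul_assoc, hwe, zero_mul]
    have hvw' : v * star w = 0 := by
      simpa [star_mul, star_star] using congrArg star hwv'
    have hv'w : star v * w = 0 := by rw [← hrw, ← mul_assoc, hv'r, zero_mul]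
    have hw'v : star w * v = 0 := by
      simpa [star_mul, star_star] using congrArg star hv'w
    have hww : w * w = 0 := by
      nth_rewrite 2 [← hrw]
      rw [← mul_assoc, hwr, zero_mul]
    have hw'w' : star w * star w = 0 := by
      simpa [star_mul, star_star] using congrArg star hww
    refine matrix_units_hom ![1 - e - e', w, v * r * w] ![e - r, v * (e - r)]
      (1 - e - e') (e - r) ?_ ?_ ?_ ?_ ?_ ?_
    · intro i j
      fin_cases i <;> fin_cases j <;> simp [mul_assoc, mul_sub, sub_mul, star_sub, star_one, star_mul, star_star, hsa, h'sa, hrsa, hee, he'e', hrr, hee', he'e, her, hre, he'r, hre', hv1, hv2, hve, hev', he'v, hv'e', hev, hv'e, hve', he'v', hvv, hv'v', hrv, hv'r, hw1, hw2, hrw, hw'r, hwe, hwe', hew', he'w', hew, he'w, hw'e, hw'e', hwr, hrw', hwv, hv'w', hwv', hvw', hv'w, hw'v, hww, hw'w', hwf, ap hee, ap he'e', ap hrr, ap hee', ap he'e, ap her, ap hre, ap he'r, ap hre', ap hv1, ap hv2, ap hve, ap hev', ap he'v, ap hv'e', ap hev, ap hv'e, ap hve', ap he'v', ap hvv, ap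 hv'v', ap hrv, ap hv'r, ap hw1, ap hw2, ap hrw, ap hw'r, ap hwe, ap hwe', ap hew', ap he'w', ap hew, ap he'w, ap hw'e, ap hw'e', ap hwr, ap hrw', ap hwv, ap hv'w', ap hwv', ap hvw', ap hv'w, ap hw'v, ap hww, ap hw'w'] <;> abel
    · intro i j
      fin_cases i <;> fin_cases j <;> simp [mul_assoc, mul_sub, sub_mul, star_sub, star_one, star_mul, star_star, hsa, h'sa, hrsa, hee, he'e', hrr, hee', he'e, her, hre, he'r, hre', hv1, hv2, hve, hev', he'v, hv'e', hev, hv'e, hve', he'v', hvv, hv'v', hrv, hv'r, hw1, hw2, hrw, hw'r, hwe, hwe', hew', he'w', hew, he'w, hw'e, hw'e', hwr, hrw', hwv, hv'w', hwv', hvw', hv'w, hw'v, hww, hw'w', hwf, ap hee, ap he'e', ap hrr, ap hee', ap he'e, ap her, ap hre, ap he'r, ap hre', ap hv1, ap hv2, ap hve, ap hev', ap he'v, ap hv'e', ap hev, ap hv'e, ap hve', ap he'v', ap hvv, ap hv'v', ap hrv, ap hv'r, ap hw1, ap hw2, ap hrw, ap hw'r, ap hwe, ap hwe', ap hew', ap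 he'w', ap hew, ap he'w, ap hw'e, ap hw'e', ap hwr, ap hrw', ap hwv, ap hv'w', ap hwv', ap hvw', ap hv'w, ap hw'v, ap hww, ap hw'w'] <;> abel
    · intro i j
      fin_cases i <;> fin_cases j <;> simp [mul_assoc, mul_sub, sub_mul, star_sub, star_one, star_mul, star_star, hsa, h'sa, hrsa, hee, he'e', hrr, hee', he'e, her, hre, he'r, hre', hv1, hv2, hve, hev', he'v, hv'e', hev, hv'e, hve', he'v', hvv, hv'v', hrv, hv'r, hw1, hw2, hrw, hw'r, hwe, hwe', hew', he'w', hew, he'w, hw'e, hw'e', hwr, hrw', hwv, hv'w', hwv', hvw', hv'w, hw'v, hww, hw'w', hwf, ap hee, ap he'e', ap hrr, ap hee', ap he'e, ap her, ap hre, ap he'r, ap hre', ap hv1, ap hv2, ap hve, ap hev', ap he'v, ap hv'e', ap hev, ap hv'e, ap hve', ap he'v', ap hvv, ap hv'v', ap hrv, ap hv'r, ap hw1, ap hw2, ap hrw, ap hw'r, ap hwe, ap hwe', ap hew', ap he'w', ap hew, ap he'w, ap hw'e, ap hw'e', ap hwr, ap hrw', ap hwv, ap hv'w', ap hwv', ap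 hvw', ap hv'w, ap hw'v, ap hww, ap hw'w'] <;> abel
    · intro i
      fin_cases i <;> simp [mul_assoc, mul_sub, sub_mul, star_sub, star_one, star_mul, star_star, hsa, h'sa, hrsa, hee, he'e', hrr, hee', he'e, her, hre, he'r, hre', hv1, hv2, hve, hev', he'v, hv'e', hev, hv'e, hve', he'v', hvv, hv'v', hrv, hv'r, hw1, hw2, hrw, hw'r, hwe, hwe', hew', he'w', hew, he'w, hw'e, hw'e', hwr, hrw', hwv, hv'w', hwv', hvw', hv'w, hw'v, hww, hw'w', hwf, ap hee, ap he'e', ap hrr, ap hee', ap he'e, ap her, ap hre, ap he'r, ap hre', ap hv1, ap hv2, ap hve, ap hev', ap he'v, ap hv'e', ap hev, ap hv'e, ap hve', ap he'v', ap hvv, ap hv'v', ap hrv, ap hv'r, ap hw1, ap hw2, ap hrw, ap hw'r, ap hwe, ap hwe', ap hew', ap he'w', ap hew, ap he'w, ap hw'e, ap hw'e', ap hwr, ap hrw', ap hwv, ap hv'w', ap hwv', ap hvw', ap hv'w, ap hw'v, ap hww, ap hw'w'] <;> abel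
    · intro i
      fin_cases i <;> simp [mul_assoc, mul_sub, sub_mul, star_sub, star_one, star_mul, star_star, hsa, h'sa, hrsa, hee, he'e', hrr, hee', he'e, her, hre, he'r, hre', hv1, hv2, hve, hev', he'v, hv'e', hev, hv'e, hve', he'v', hvv, hv'v', hrv, hv'r, hw1, hw2, hrw, hw'r, hwe, hwe', hew', he'w', hew, he'w, hw'e, hw'e', hwr, hrw', hwv, hv'w', hwv', hvw', hv'w, hw'v, hww, hw'w', hwf, ap hee, ap he'e', ap hrr, ap hee', ap he'e, ap her, ap hre, ap he'r, ap hre', ap hv1, ap hv2, ap hve, ap hev', ap he'v, ap hv'e', ap hev, ap hv'e, ap hve', ap he'v', ap hvv, ap hv'v', ap hrv, ap hv'r, ap hw1, ap hw2, ap hrw, ap hw'r, ap hwe, ap hwe', ap hew', ap he'w', ap hew, ap he'w, ap hw'e, ap hw'e', ap hwr, ap hrw', ap hwv, ap hv'w', ap hwv', ap hvw', ap hv'w, ap hw'v, ap hww, ap hw'w'] <;> abel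
    · simp [Fin.sum_univ_three, Fin.sum_univ_two, mul_assoc, mul_sub, sub_mul, star_sub, star_one, star_mul, star_star, hsa, h'sa, hrsa, hee, he'e', hrr, hee', he'e, her, hre, he'r, hre', hv1, hv2, hve, hev', he'v, hv'e', hev, hv'e, hve', he'v', hvv, hv'v', hrv, hv'r, hw1, hw2, hrw, hw'r, hwe, hwe', hew', he'w', hew, he'w, hw'e, hw'e', hwr, hrw', hwv, hv'w', hwv', hvw', hv'w, hw'v, hww, hw'w', hwf, ap hee, ap he'e', ap hrr, ap hee', ap he'e, ap her, ap hre, ap he'r, ap hre', ap hv1, ap hv2, ap hve, ap hev', ap he'v, ap hv'e', ap hev, ap hv'e, ap hve', ap he'v', ap hvv, ap hv'v', ap hrv, ap hv'r, ap hw1, ap hw2, ap hrw, ap hw'r, ap hwe, ap hwe', ap hew', ap he'w', ap hew, ap he'w, ap hw'e, ap hw'e', ap hwr, ap hrw', ap hwv, ap hv'w', ap hwv', ap hvw', ap hv'w, ap hw'v, ap hww, ap hw'w']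
      abel
end

section
/- Let A be a unital C*-algebra and let e, e' be projections in A such that e·e' = 0, e ∼ e', and 1 − e − e' ≾ e. Then there exist projections f₀, f₁, f₂, g₁, g₂ in A that are pairwise orthogonal (the product of any two distinct ones is 0), satisfy f₀ + f₁ + f₂ + g₁ + g₂ = 1, f₀ = 1 − e − e', f₀ ∼ f₁, f₁ ∼ f₂, and g₁ ∼ g₂. -/
/-- A partial isometry fact: if `star w * w` is idempotent then `w * (star w * w) = w`. -/
lemma aux_partial_isometry {A : Type*} [NormedRing A] [StarRing A] [CStarRing A]
    (w : A) (h : (star w * w) * (star w * w) = star w * w) :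
    w * (star w * w) = w := by
  have hz : star (w * (star w * w) - w) * (w * (star w * w) - w) = 0 := by
    have expand : star (w * (star w * w) - w) * (w * (star w * w) - w)
        = (star w * w) * (star w * w) * (star w * w)
          - (star w * w) * (star w * w) - (star w * w) * (star w * w) + (star w * w) := by
      simp only [star_sub, star_mul, star_star]
      noncomm_ring
    rw [expand, h, h]
    abel
  have := (CStarRing.star_mul_self_eq_zero_iff _).mp hz
  exact sub_eq_zero.mp this

/-- If `e, e'` are projections in a unital C*-algebra `A` with `e·e' = 0`,
`e ∼ e'`, and `1 - e - e' ≾ e`, then there exist pairwise orthogonal projections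
`f₀, f₁, f₂, g₁, g₂` (indexed below by `f 0, f 1, f 2, f 3, f 4`) summing to `1`,
with `f₀ = 1 - e - e'`, `f₀ ∼ f₁ ∼ f₂` and `g₁ ∼ g₂`. -/
theorem exists_partition_of_unity_3_2
    {A : Type*} [NormedRing A] [StarRing A] [CStarRing A] [CompleteSpace A]
    [NormedAlgebra ℂ A] [StarModule ℂ A]
    (e e' : A) (he : IsProjection e) (he' : IsProjection e')
    (horth : e * e' = 0) (hequiv : MvNEquiv e e')
    (hsub : MvNSubequiv (1 - e - e') e) :
    ∃ f : Fin 5 → A,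
      (∀ i, IsProjection (f i)) ∧
      (∀ i j, i ≠ j → f i * f j = 0) ∧
      f 0 + f 1 + f 2 + f 3 + f 4 = 1 ∧
      f 0 = 1 - e - e' ∧
      MvNEquiv (f 0) (f 1) ∧ MvNEquiv (f 1) (f 2) ∧ MvNEquiv (f 3) (f 4) := by
  obtain ⟨r, ⟨hrsa, hrr⟩, her, hre, v, hv1, hv2⟩ := hsub
  obtain ⟨w, hw1, hw2⟩ := hequiv
  obtain ⟨hesa, hee⟩ := he
  obtain ⟨hesa', hee'⟩ := he'
  -- basic star facts
  have hse : star e = e := hesa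
  have hse' : star e' = e' := hesa'
  have hsr : star r = r := hrsa
  have horth' : e' * e = 0 := by
    have := congrArg star horth
    simpa [star_mul, hse, hse'] using this
  -- partial isometry facts
  have hwe : w * e = w := by
    have := aux_partial_isometry w (by rw [hw1, hee])
    rwa [hw1] at this
  have hew' : e * star w = star w := by
    have := congrArg star hwe
    simpa [star_mul, hse] using this
  have he'w : e' * w = w := by
    rw [← hw2, mul_assoc, hw1, hwe]
  have hw'e' : star w * e' = star w := by
    rw [← hw2, ← mul_assoc, hw1, hew']
  have hew : e * w = 0 := by
    rw [← he'w, ← mul_assoc, horth, zero_mul]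
  have hwe' : w * e' = 0 := by
    rw [← hwe, mul_assoc, horth, mul_zero]
  have hw'e : star w * e = 0 := by
    have := congrArg star hew
    simpa [star_mul, hse] using this
  have he'w' : e' * star w = 0 := by
    have := congrArg star hwe'
    simpa [star_mul, hse'] using this
  -- r facts
  have hre' : r * e' = 0 := by rw [hre, mul_assoc, horth, mul_zero]
  have he'r : e' * r = 0 := by rw [her, ← mul_assoc, horth', zero_mul]
  -- define pieces
  set f2 : A := w * r * star w with hf2def
  have hf2sa : star f2 = f2 := by
    simp [hf2def, star_mul, hsr, star_star, mul_assoc]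
  have hw'wr : star w * (w * r) = r := by
    rw [← mul_assoc, hw1, ← her]
  have hf2f2 : f2 * f2 = f2 := by
    calc f2 * f2 = w * r * (star w * (w * r)) * star w := by
          simp [hf2def, mul_assoc]
      _ = w * (r * r) * star w := by rw [hw'wr]; simp [mul_assoc]
      _ = f2 := by rw [hrr]
  have he'f2 : e' * f2 = f2 := by
    simp only [hf2def, ← mul_assoc, he'w]
  have hf2e' : f2 * e' = f2 := by
    simp only [hf2def, mul_assoc, hw'e']
  have hef2 : e * f2 = 0 := by
    simp only [hf2def, ← mul_assoc, hew, zero_mul]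
  have hf2e : f2 * e = 0 := by
    simp only [hf2def, mul_assoc, hw'e, mul_zero]
  have hrw : r * w = 0 := by rw [hre, mul_assoc, hew, mul_zero]
  have hw'r : star w * r = 0 := by rw [her, ← mul_assoc, hw'e, zero_mul]
  have hrf2 : r * f2 = 0 := by
    rw [hf2def, ← mul_assoc, ← mul_assoc, hrw, zero_mul, zero_mul]
  have hf2r : f2 * r = 0 := by rw [hf2def, mul_assoc, hw'r, mul_zero]
  -- f0 facts
  have hf0e : (1 - e - e') * e = 0 := by
    simp [sub_mul, hee, horth']
  have hef0 : e * (1 - e - e') = 0 := by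
    simp [mul_sub, hee, horth]
  have hf0e' : (1 - e - e') * e' = 0 := by
    simp [sub_mul, hee', horth]
  have he'f0 : e' * (1 - e - e') = 0 := by
    simp [mul_sub, hee', horth']
  have hf0r : (1 - e - e') * r = 0 := by
    rw [sub_mul, sub_mul, one_mul, ← her, he'r, sub_zero, sub_self]
  have hrf0 : r * (1 - e - e') = 0 := by
    rw [mul_sub, mul_sub, mul_one, ← hre, hre', sub_zero, sub_self]
  have hf0f2 : (1 - e - e') * f2 = 0 := by
    rw [sub_mul, sub_mul, one_mul, hef2, he'f2, sub_zero, sub_self]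
  have hf2f0 : f2 * (1 - e - e') = 0 := by
    rw [mul_sub, mul_sub, mul_one, hf2e, hf2e', sub_zero, sub_self]
  refine ⟨![1 - e - e', r, f2, e - r, e' - f2], ?_, ?_, ?_, rfl, ?_, ?_, ?_⟩
  · intro i
    fin_cases i
    · show IsProjection (1 - e - e')
      constructor
      · simp only [IsSelfAdjoint, star_sub, star_one, hse, hse']
      · have : (1 - e - e') * (1 - e - e') = (1 - e - e') - e * (1 - e - e') - e' * (1 - e - e') := by
          noncomm_ring
        rw [this, hef0, he'f0]; abel
    · exact ⟨hrsa, hrr⟩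
    · exact ⟨hf2sa, hf2f2⟩
    · show IsProjection (e - r)
      constructor
      · simp only [IsSelfAdjoint, star_sub, hse, hsr]
      · have : (e - r) * (e - r) = e * e - e * r - r * e + r * r := by noncomm_ring
        rw [this, hee, hrr, ← her, ← hre]; abel
    · show IsProjection (e' - f2)
      constructor
      · simp only [IsSelfAdjoint, star_sub, hse', hf2sa]
      · have : (e' - f2) * (e' - f2) = e' * e' - e' * f2 - f2 * e' + f2 * f2 := by noncomm_ring
        rw [this, hee', hf2f2, he'f2, hf2e']; abel
  · intro i j hij
    have p34 : (e - r) * (e' - f2) = 0 := by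
      have : (e - r) * (e' - f2) = e * e' - e * f2 - r * e' + r * f2 := by noncomm_ring
      rw [this, horth, hef2, hre', hrf2]; abel
    have p43 : (e' - f2) * (e - r) = 0 := by
      have : (e' - f2) * (e - r) = e' * e - e' * r - f2 * e + f2 * r := by noncomm_ring
      rw [this, horth', he'r, hf2e, hf2r]; abel
    have p03 : (1 - e - e') * (e - r) = 0 := by rw [mul_sub, hf0e, hf0r, sub_zero]
    have p30 : (e - r) * (1 - e - e') = 0 := by rw [sub_mul, hef0, hrf0, sub_zero]
    have p04 : (1 - e - e') * (e' - f2) = 0 := by rw [mul_sub, hf0e', hf0f2, sub_zero]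
    have p40 : (e' - f2) * (1 - e - e') = 0 := by rw [sub_mul, he'f0, hf2f0, sub_zero]
    have p13 : r * (e - r) = 0 := by rw [mul_sub, ← hre, hrr, sub_self]
    have p31 : (e - r) * r = 0 := by rw [sub_mul, ← her, hrr, sub_self]
    have p14 : r * (e' - f2) = 0 := by rw [mul_sub, hre', hrf2, sub_zero]
    have p41 : (e' - f2) * r = 0 := by rw [sub_mul, he'r, hf2r, sub_zero]
    have p23 : f2 * (e - r) = 0 := by rw [mul_sub, hf2e, hf2r, sub_zero]
    have p32 : (e - r) * f2 = 0 := by rw [sub_mul, hef2, hrf2, sub_zero]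
    have p24 : f2 * (e' - f2) = 0 := by rw [mul_sub, hf2e', hf2f2, sub_self]
    have p42 : (e' - f2) * f2 = 0 := by rw [sub_mul, he'f2, hf2f2, sub_self]
    fin_cases i <;> fin_cases j <;>
      first
        | exact absurd rfl hij
        | assumption
  · show (1 - e - e') + r + f2 + (e - r) + (e' - f2) = 1
    abel
  · exact ⟨v, hv1, hv2⟩
  · refine ⟨w * r, ?_, ?_⟩
    · show star (w * r) * (w * r) = r
      rw [star_mul, hsr, mul_assoc, hw'wr, hrr]
    · show w * r * star (w * r) = f2
      rw [star_mul, hsr, hf2def, ← mul_assoc, mul_assoc w r r, hrr]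
  · have hg1g1 : (e - r) * (e - r) = e - r := by
      have : (e - r) * (e - r) = e * e - e * r - r * e + r * r := by noncomm_ring
      rw [this, hee, hrr, ← her, ← hre]; abel
    refine ⟨w * (e - r), ?_, ?_⟩
    · have hs : star (w * (e - r)) = (e - r) * star w := by
        simp [star_mul, hse, hsr]
      show star (w * (e - r)) * (w * (e - r)) = e - r
      rw [hs]
      calc (e - r) * star w * (w * (e - r)) = (e - r) * (star w * w) * (e - r) := by
            noncomm_ring
        _ = (e - r) * e * (e - r) := by rw [hw1]
        _ = (e - r) * (e - r) := by rw [sub_mul, hee, ← hre]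
        _ = e - r := hg1g1
    · have hs : star (w * (e - r)) = (e - r) * star w := by
        simp [star_mul, hse, hsr]
      show w * (e - r) * star (w * (e - r)) = e' - f2
      rw [hs]
      calc w * (e - r) * ((e - r) * star w) = w * ((e - r) * (e - r)) * star w := by
            noncomm_ring
        _ = w * (e - r) * star w := by rw [hg1g1]
        _ = w * e * star w - w * r * star w := by noncomm_ring
        _ = e' - f2 := by rw [hwe, hw2]
end
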